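/- Let n ≥ 1 and let W be the odd wheel graph on 2n + 2 vertices, consisting of a cycle on 2n + 1 vertices together with a hub vertex adjacent to every cycle vertex. Let f_1,…,f_s denote the polynomials of the 3-coloring polynomial system of W over the field F₂ = ZMod 2. Then there exist polynomials β_1,…,β_s ∈ F₂[x_v : v ∈ V(W)], each of total degree at most 1, such that 1 = Σ_{i=1}^s β_i f_i; that is, W has a Nullstellensatz certificate of degree one over F₂. -/

import Mathlib

open scoped Classical

/-- The wheel graph on `Option (Fin m)`: a hub vertex (`none`) adjacent to every vertex of
the cycle graph on `m` vertices (the `some` vertices), together with the cycle edges. -/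
def wheelGraph (m : ℕ) : SimpleGraph (Option (Fin m)) :=
  SimpleGraph.fromRel (fun a b =>
    a = none ∨ ∃ i j : Fin m, a = some i ∧ b = some j ∧ (SimpleGraph.cycleGraph m).Adj i j)

namespace OddWheelCert

open MvPolynomial

variable (n : ℕ)

abbrev P := MvPolynomial (Option (Fin (2*n+1))) (ZMod 2)

noncomputable def x (i : Fin (2*n+1)) : P n := X (some i)

noncomputable def y : P n := X none

noncomputable def g : Option (Fin (2*n+1)) → Option (Fin (2*n+1)) → P n
  | none, none => 0
  | none, some i => x n (i-1) + x n (i+1)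
  | some i, none => x n (i-1) + x n (i+1)
  | some i, some j => (if i+1 = j then x n i else 0) + (if j+1 = i then x n j else 0)

lemma g_symm : ∀ a b, g n a b = g n b a := by
  rintro (_|i) (_|j) <;> simp [g, add_comm]

noncomputable def γ : Sym2 (Option (Fin (2*n+1))) → P n := Sym2.lift ⟨g n, g_symm n⟩

lemma val_one (hn : 1 ≤ n) : (1 : Fin (2*n+1)).val = 1 := by
  rw [Fin.val_one']
  exact Nat.mod_eq_of_lt (by omega)

lemma cyc_adj (hn : 1 ≤ n) (i j : Fin (2*n+1)) :
    (SimpleGraph.cycleGraph (2*n+1)).Adj i j ↔ (i - j = 1 ∨ j - i = 1) := by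
  rw [SimpleGraph.cycleGraph_adj']
  have key : ∀ a b : Fin (2*n+1), (a - b).val = 1 ↔ a - b = 1 := fun a b => by
    rw [Fin.ext_iff, val_one n hn]
  rw [key, key]

lemma two_ne (hn : 1 ≤ n) (i : Fin (2*n+1)) : i + 1 + 1 ≠ i := by
  intro h
  have h0 : (1 + 1 : Fin (2*n+1)) = 0 := by
    have h' : i + (1 + 1) = i + 0 := by rw [← add_assoc, h, add_zero]
    exact add_left_cancel h'
  have hv := congrArg Fin.val h0
  rw [Fin.val_add, val_one n hn] at hv
  rw [Nat.mod_eq_of_lt (by omega)] at hv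
  simp at hv

lemma wheel_edgeFinset (hn : 1 ≤ n) :
    (wheelGraph (2*n+1)).edgeFinset =
      (Finset.univ.image fun i : Fin (2*n+1) => s(none, some i)) ∪
      (Finset.univ.image fun i : Fin (2*n+1) => s(some i, some (i+1))) := by
  ext e
  induction e with
  | _ a b =>
    rw [SimpleGraph.mem_edgeFinset, SimpleGraph.mem_edgeSet]
    rw [Finset.mem_union, Finset.mem_image, Finset.mem_image]
    simp only [Finset.mem_univ, true_and]
    constructor
    · rintro ⟨hne, hr⟩
      match a, b with
      | none, none => exact absurd rfl hne
      | none, some j => exact Or.inl ⟨j, rfl⟩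
      | some i, none => exact Or.inl ⟨i, Sym2.eq_swap⟩
      | some i, some j =>
        right
        have hadj : (SimpleGraph.cycleGraph (2*n+1)).Adj i j := by
          rcases hr with (h|h)
          · rcases h with h | ⟨i', j', hi, hj, h⟩
            · exact absurd h (by simp)
            · cases hi; cases hj; exact h
          · rcases h with h | ⟨i', j', hi, hj, h⟩
            · exact absurd h (by simp)
            · cases hi; cases hj; exact h.symm
        rcases (cyc_adj n hn i j).mp hadj with h | h
        · refine ⟨j, ?_⟩
          rw [sub_eq_iff_eq_add] at h
          rw [h, add_comm 1 j]; exact Sym2.eq_swap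
        · refine ⟨i, ?_⟩
          rw [sub_eq_iff_eq_add] at h
          rw [h, add_comm 1 i]
    · rintro (⟨i, hi⟩ | ⟨i, hi⟩)
      · rw [Sym2.eq_iff] at hi
        rcases hi with ⟨rfl, rfl⟩ | ⟨rfl, rfl⟩
        · exact ⟨by simp, Or.inl (Or.inl rfl)⟩
        · exact ⟨by simp, Or.inr (Or.inl rfl)⟩
      · have hadj : (SimpleGraph.cycleGraph (2*n+1)).Adj i (i+1) := by
          rw [cyc_adj n hn]
          right; rw [add_sub_cancel_left]
        rw [Sym2.eq_iff] at hi
        rcases hi with ⟨rfl, rfl⟩ | ⟨rfl, rfl⟩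
        · refine ⟨?_, Or.inl (Or.inr ⟨i, i+1, rfl, rfl, hadj⟩)⟩
          simp only [ne_eq, Option.some.injEq]
          intro h; exact hadj.ne h
        · refine ⟨?_, Or.inr (Or.inr ⟨i, i+1, rfl, rfl, hadj⟩)⟩
          simp only [ne_eq, Option.some.injEq]
          intro h; exact hadj.ne h.symm

lemma h2 : (2 : P n) = 0 := CharTwo.two_eq_zero

lemma shift (f : Fin (2*n+1) → P n) (d : Fin (2*n+1)) :
    ∑ i : Fin (2*n+1), f (i - d) = ∑ i, f i :=
  Fintype.sum_equiv (Equiv.subRight d) _ _ (fun _ => rfl)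

lemma add_self (p : P n) : p + p = 0 := CharTwo.add_self_eq_zero p

lemma main_sum :
    (∑ i : Fin (2*n+1), ((X (some i) : P n) ^ 3 + 1))
      + ((∑ i : Fin (2*n+1), (x n (i-1) + x n (i+1)) *
            ((X none : P n) ^ 2 + X none * X (some i) + X (some i) ^ 2))
        + (∑ i : Fin (2*n+1), x n i *
            ((X (some i) : P n) ^ 2 + X (some i) * X (some (i+1)) + X (some (i+1)) ^ 2)))
      = 1 := by
  have key : ∀ i : Fin (2*n+1),
      ((X (some i) : P n) ^ 3 + 1)
        + ((x n (i-1) + x n (i+1)) *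
            ((X none : P n) ^ 2 + X none * X (some i) + X (some i) ^ 2)
          + x n i *
            ((X (some i) : P n) ^ 2 + X (some i) * X (some (i+1)) + X (some (i+1)) ^ 2))
      = 1 + ((X none ^ 2 * x n (i-1) + X none ^ 2 * x n (i+1))
          + ((X none * x n (i-1) * x n (i-1+1) + X none * x n i * x n (i+1))
          + (x n (i-1) * x n (i-1+1) ^ 2 + x n i * x n (i+1) ^ 2))) := by
    intro i
    rw [sub_add_cancel]
    simp only [x]
    linear_combination (X (some i) ^ 3 + X (some i) ^ 2 * X (some (i+1))) * h2 n
  rw [← Finset.sum_add_distrib, ← Finset.sum_add_distrib]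
  rw [Finset.sum_congr rfl (fun i _ => key i)]
  simp only [Finset.sum_add_distrib]
  have sA : (∑ i : Fin (2*n+1), ((X none : P n) ^ 2 * x n (i-1)))
      = ∑ i, (X none : P n) ^ 2 * x n i :=
    Fintype.sum_equiv (Equiv.subRight 1) _ _ fun i => rfl
  have sB : (∑ i : Fin (2*n+1), ((X none : P n) * x n (i-1) * x n (i-1+1)))
      = ∑ i, (X none : P n) * x n i * x n (i+1) :=
    Fintype.sum_equiv (Equiv.subRight 1) _ _ fun i => rfl
  have sC : (∑ i : Fin (2*n+1), (x n (i-1) * x n (i-1+1) ^ 2))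
      = ∑ i, x n i * x n (i+1) ^ 2 :=
    Fintype.sum_equiv (Equiv.subRight 1) _ _ fun i => rfl
  have sA' : (∑ i : Fin (2*n+1), ((X none : P n) ^ 2 * x n (i+1)))
      = ∑ i, (X none : P n) ^ 2 * x n i :=
    Fintype.sum_equiv (Equiv.addRight 1) _ _ fun i => rfl
  rw [sA, sA', sB, sC, add_self, add_self, add_self]
  have sone : (∑ _i : Fin (2*n+1), (1 : P n)) = 1 := by
    rw [Finset.sum_const, Finset.card_univ, Fintype.card_fin, nsmul_eq_mul, mul_one]
    push_cast
    rw [h2 n]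
    ring
  rw [sone]
  ring

end OddWheelCert

/-- For every `n ≥ 1`, the odd wheel on `2n + 2` vertices (hub joined to
an odd cycle on `2n + 1` vertices) has a degree-one Nullstellensatz certificate over
`𝔽₂ = ZMod 2` for its `3`-coloring polynomial system: there are coefficient polynomials of
total degree at most one, one per vertex polynomial `X v ^ 3 + 1` and one per edge
polynomial `X u ^ 2 + X u * X w + X w ^ 2`, whose combination equals `1`. -/
theorem odd_wheel_degree_one_certificate (n : ℕ) (hn : 1 ≤ n) :
    ∃ (β : Option (Fin (2 * n + 1)) → MvPolynomial (Option (Fin (2 * n + 1))) (ZMod 2))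
      (γ : Sym2 (Option (Fin (2 * n + 1))) →
        MvPolynomial (Option (Fin (2 * n + 1))) (ZMod 2)),
      (∀ v, (β v).totalDegree ≤ 1) ∧ (∀ e, (γ e).totalDegree ≤ 1) ∧
      (1 : MvPolynomial (Option (Fin (2 * n + 1))) (ZMod 2)) =
        (∑ v : Option (Fin (2 * n + 1)), β v * (MvPolynomial.X v ^ 3 + 1)) +
        ∑ e ∈ (wheelGraph (2 * n + 1)).edgeFinset, γ e *
          Sym2.lift ⟨fun u w =>
              MvPolynomial.X u ^ 2 + MvPolynomial.X u * MvPolynomial.X w +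
                MvPolynomial.X w ^ 2,
            fun u w => by ring⟩ e := by
  classical
  open MvPolynomial OddWheelCert in
  refine ⟨fun v => v.elim 0 (fun _ => 1), OddWheelCert.γ n, ?_, ?_, ?_⟩
  · rintro (_|i) <;> simp
  · intro e
    induction e with
    | _ a b =>
      have hx : ∀ v : Option (Fin (2*n+1)),
          (X v : P n).totalDegree ≤ 1 := fun v => le_of_eq (totalDegree_X v)
      have hadd : ∀ p q : P n, p.totalDegree ≤ 1 → q.totalDegree ≤ 1 →
          (p + q).totalDegree ≤ 1 := fun p q hp hq =>
        le_trans (totalDegree_add p q) (max_le hp hq)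
      show (OddWheelCert.g n a b).totalDegree ≤ 1
      match a, b with
      | none, none => simp [OddWheelCert.g]
      | none, some i => exact hadd _ _ (hx _) (hx _)
      | some i, none => exact hadd _ _ (hx _) (hx _)
      | some i, some j =>
        show ((if i+1 = j then OddWheelCert.x n i else 0)
          + (if j+1 = i then OddWheelCert.x n j else 0)).totalDegree ≤ 1
        refine hadd _ _ ?_ ?_ <;> split_ifs <;>
          first | exact hx _ | simp
  · have hdisj : Disjoint
        (Finset.univ.image fun i : Fin (2*n+1) => s(none, some i))
        (Finset.univ.image fun i : Fin (2*n+1) => s(some i, some (i+1))) := by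
      rw [Finset.disjoint_left]
      simp only [Finset.mem_image, Finset.mem_univ, true_and]
      rintro e ⟨i, rfl⟩ ⟨j, hj⟩
      rw [Sym2.eq_iff] at hj
      rcases hj with ⟨h, -⟩ | ⟨-, h⟩ <;> exact nomatch h
    have hinjS : ∀ i ∈ Finset.univ, ∀ j ∈ Finset.univ,
        s((none : Option (Fin (2*n+1))), some i) = s(none, some j) → i = j := by
      intro i _ j _ h
      rw [Sym2.eq_iff] at h
      rcases h with ⟨-, h⟩ | ⟨h, -⟩
      · exact Option.some_injective _ h
      · exact nomatch h
    have hinjT : ∀ i ∈ Finset.univ, ∀ j ∈ Finset.univ,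
        s(some i, some (i+1)) = s((some j : Option (Fin (2*n+1))), some (j+1)) → i = j := by
      intro i _ j _ h
      rw [Sym2.eq_iff] at h
      rcases h with ⟨h1, -⟩ | ⟨h1, h2⟩
      · exact Option.some_injective _ h1
      · exfalso
        have e1 : i = j + 1 := Option.some_injective _ h1
        have e2 : i + 1 = j := Option.some_injective _ h2
        apply OddWheelCert.two_ne n hn j
        rw [← e1, e2]
    rw [OddWheelCert.wheel_edgeFinset n hn, Finset.sum_union hdisj,
        Finset.sum_image hinjS, Finset.sum_image hinjT, Fintype.sum_option]
    have hγs : ∀ i : Fin (2*n+1), OddWheelCert.γ n s(none, some i)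
        = OddWheelCert.x n (i-1) + OddWheelCert.x n (i+1) := fun i => rfl
    have hγc : ∀ i : Fin (2*n+1), OddWheelCert.γ n s(some i, some (i+1))
        = OddWheelCert.x n i := by
      intro i
      show (if i+1 = i+1 then OddWheelCert.x n i else 0)
        + (if (i+1)+1 = i then OddWheelCert.x n (i+1) else 0) = OddWheelCert.x n i
      rw [if_pos rfl, if_neg (OddWheelCert.two_ne n hn i), add_zero]
    simp only [hγs, hγc, Sym2.lift_mk, Option.elim_none, Option.elim_some,
      zero_mul, one_mul, zero_add]
    linear_combination (OddWheelCert.main_sum n).symm
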